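/- (Core of Proposition 1) Let σ, η', ρ ∈ ℝ and u, g ∈ ℝ² with u ≠ 0, set ν = ρ/‖u‖, and let A = (1 + σ(ν − 1))·I + u·wᵀ with w = −(ρσ/‖u‖³)·u + η'(ν − 1)·g. If 0 < σ ≤ 1, 0 < ρ < ‖u‖ (so that 0 < ν < 1), η' < 0, and ⟨u, g⟩ > 0, then det A > 0 and trace A > 0; in particular A is invertible. -/

import Mathlib

noncomputable section
open RealInnerProductSpace

/-- (Core of Proposition 1) For A = (1 + σ(ν − 1))·I + u·wᵀ with w = −(ρσ/‖u‖³)u + η'(ν − 1)g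
and ν = ρ/‖u‖: if 0 < σ ≤ 1, 0 < ρ < ‖u‖, η' < 0 and ⟨u, g⟩ > 0, then det A > 0 and
trace A > 0; in particular A is invertible. -/
theorem jacobian_positive_det_trace (σ ν η' ρ : ℝ)
    (u g : EuclideanSpace ℝ (Fin 2)) (hu : u ≠ 0)
    (hν : ν = ρ / ‖u‖)
    (w : EuclideanSpace ℝ (Fin 2))
    (hw : w = (-(ρ * σ / ‖u‖ ^ 3)) • u + (η' * (ν - 1)) • g)
    (A : Matrix (Fin 2) (Fin 2) ℝ)
    (hA : A = (1 + σ * (ν - 1)) • (1 : Matrix (Fin 2) (Fin 2) ℝ) +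
      Matrix.vecMulVec (fun i => u i) (fun i => w i))
    (hσ1 : 0 < σ) (hσ2 : σ ≤ 1) (hρ : 0 < ρ) (hρu : ρ < ‖u‖)
    (hη' : η' < 0) (hug : 0 < ⟪u, g⟫) :
    0 < A.det ∧ 0 < A.trace ∧ IsUnit A := by
  have hn : (0:ℝ) < ‖u‖ := norm_pos_iff.mpr hu
  have hn' : ‖u‖ ≠ 0 := ne_of_gt hn
  have hsum : u 0 * u 0 + u 1 * u 1 = ‖u‖ ^ 2 := by
    have := real_inner_self_eq_norm_sq u
    simp only [PiLp.inner_apply, Fin.sum_univ_two, RCLike.inner_apply, conj_trivial] at this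
    linarith
  have hinner : ⟪u, g⟫ = u 0 * g 0 + u 1 * g 1 := by
    simp [PiLp.inner_apply, Fin.sum_univ_two, RCLike.inner_apply]; ring
  -- ν bounds
  have hν0 : 0 < ν := by rw [hν]; positivity
  have hν1 : ν < 1 := by rw [hν]; exact (div_lt_one hn).mpr hρu
  set c : ℝ := 1 + σ * (ν - 1) with hc
  have hcpos : 0 < c := by nlinarith
  -- inner product of u and w
  have hwi : ∀ i, w i = (-(ρ * σ / ‖u‖ ^ 3)) * u i + (η' * (ν - 1)) * g i := by
    intro i; rw [hw]; rfl
  set s : ℝ := u 0 * w 0 + u 1 * w 1 with hs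
  have hsval : s = -(σ * ν) + η' * (ν - 1) * ⟪u, g⟫ := by
    have h1 : ρ * σ / ‖u‖ ^ 3 * ‖u‖ ^ 2 = σ * ν := by
      rw [hν]; field_simp
    have h2 : s = -(ρ * σ / ‖u‖ ^ 3 * (u 0 * u 0 + u 1 * u 1))
        + η' * (ν - 1) * (u 0 * g 0 + u 1 * g 1) := by
      rw [hs, hwi 0, hwi 1]; ring
    rw [h2, hsum, hinner, h1]
  have hpos2 : 0 < η' * (ν - 1) * ⟪u, g⟫ := by
    have : 0 < η' * (ν - 1) := mul_pos_of_neg_of_neg hη' (by linarith)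
    exact mul_pos this hug
  have hcs : 0 < c + s := by rw [hsval, hc]; nlinarith
  -- entries of A
  have hAe : ∀ i j, A i j = c * (1 : Matrix (Fin 2) (Fin 2) ℝ) i j + u i * w j := by
    intro i j
    rw [hA]
    simp [Matrix.vecMulVec_apply, Matrix.smul_apply, hc]
    try ring
  have hdet : A.det = c * (c + s) := by
    rw [Matrix.det_fin_two, hAe 0 0, hAe 0 1, hAe 1 0, hAe 1 1]
    simp [Matrix.one_apply, hs]
    try ring
  have htr : A.trace = c + (c + s) := by
    rw [Matrix.trace_fin_two, hAe 0 0, hAe 1 1]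
    simp [Matrix.one_apply, hs]
    try ring
  have hdpos : 0 < A.det := by rw [hdet]; exact mul_pos hcpos hcs
  refine ⟨hdpos, by rw [htr]; linarith, ?_⟩
  exact (Matrix.isUnit_iff_isUnit_det A).mpr (isUnit_iff_ne_zero.mpr (ne_of_gt hdpos))
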